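/- Let z_1,...,z_k be independent Gumbel random variables with z_i having location θ_i and ∑_j exp θ_j = 1. Then the joint density of z conditioned on the order event {z_{b_1} ≥ ... ≥ z_{b_k}} factorizes as f_0(z_{b_1}) · ∏_{i=2}^k f^{z_{b_{i-1}}}_{log Θ_i}(z_{b_i}), where Θ_i = ∑_{j=i}^k exp θ_{b_j} and f^{z_0}_μ denotes the Gumbel density with location μ truncated at z_0. Equivalently, p(b|z)p(z|θ) = p(b|θ)p(z|b,θ) where p(b|θ) is the Plackett-Luce probability. -/

import Mathlib

/-- Gumbel density with location `μ`. -/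
noncomputable def gumbelPDF (μ z : ℝ) : ℝ :=
  Real.exp (-z + μ) * Real.exp (-Real.exp (-z + μ))

/-- Gumbel CDF with location `μ`. -/
noncomputable def gumbelCDF (μ z : ℝ) : ℝ := Real.exp (-Real.exp (-z + μ))

open Classical in
/-- Density of the Gumbel distribution with location `μ` truncated at `z₀`. -/
noncomputable def truncGumbelPDF (μ z₀ z : ℝ) : ℝ :=
  gumbelPDF μ z * (if z ≤ z₀ then 1 else 0) / gumbelCDF μ z₀

/-- Plackett–Luce probability of permutation `b` under scores `θ`. -/
noncomputable def plackettLuce {k : ℕ} (θ : Fin k → ℝ) (b : Equiv.Perm (Fin k)) : ℝ :=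
  ∏ m : Fin k,
    Real.exp (θ (b m)) / ∑ u ∈ Finset.univ.filter (fun u => m ≤ u), Real.exp (θ (b u))

open Classical in
/-- Proposition 1 (density form): for independent Gumbels `z_i ∼ G(θ_i, 1)` with
`∑_j exp θ_j = 1`, the joint density `p(b ∣ z) p(z ∣ θ)` factorizes as
`p(b ∣ θ) · f_0(z_{b_1}) ∏_{i=2}^k f^{z_{b_{i-1}}}_{log Θ_i}(z_{b_i})`, where
`Θ_i = ∑_{j ≥ i} exp θ_{b_j}`, `p(b ∣ z)` is the indicator of the ordering event and
`p(b ∣ θ)` is the Plackett–Luce probability. -/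
theorem conditional_gumbel_factorization (k : ℕ) (θ : Fin (k + 1) → ℝ)
    (hsum : ∑ i : Fin (k + 1), Real.exp (θ i) = 1)
    (b : Equiv.Perm (Fin (k + 1))) (z : Fin (k + 1) → ℝ) :
    (if ∀ i j : Fin (k + 1), i ≤ j → z (b j) ≤ z (b i) then (1:ℝ) else 0) *
        ∏ i : Fin (k + 1), gumbelPDF (θ i) (z i)
      = plackettLuce θ b *
          (gumbelPDF 0 (z (b 0)) *
            ∏ i : Fin k,
              truncGumbelPDF
                (Real.log (∑ u ∈ Finset.univ.filter (fun u => i.succ ≤ u),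
                  Real.exp (θ (b u))))
                (z (b i.castSucc)) (z (b i.succ))) := by
  classical
  set E : Fin (k+1) → ℝ := fun m => Real.exp (θ (b m)) with hE
  set Θ : Fin (k+1) → ℝ :=
    fun m => ∑ u ∈ Finset.univ.filter (fun u => m ≤ u), Real.exp (θ (b u)) with hΘ
  have hΘpos : ∀ m, 0 < Θ m := by
    intro m
    apply Finset.sum_pos (fun u _ => Real.exp_pos _)
    exact ⟨m, Finset.mem_filter.2 ⟨Finset.mem_univ _, le_refl m⟩⟩
  have hΘ0 : Θ 0 = 1 := by
    have h1 : Finset.univ.filter (fun u : Fin (k+1) => (0:Fin (k+1)) ≤ u) = Finset.univ := by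
      apply Finset.filter_true_of_mem; intro u _; exact Fin.zero_le u
    simp only [hΘ, h1]
    rw [Equiv.sum_comp b (fun i => Real.exp (θ i))]
    exact hsum
  have hΘrec : ∀ i : Fin k, Θ i.castSucc = E i.castSucc + Θ i.succ := by
    intro i
    have hset : Finset.univ.filter (fun u : Fin (k+1) => i.castSucc ≤ u)
        = insert i.castSucc (Finset.univ.filter (fun u : Fin (k+1) => i.succ ≤ u)) := by
      ext u
      simp only [Finset.mem_filter, Finset.mem_univ, true_and, Finset.mem_insert]
      constructor
      · intro h
        rcases eq_or_lt_of_le h with h' | h'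
        · exact Or.inl h'.symm
        · exact Or.inr (Fin.castSucc_lt_iff_succ_le.1 h')
      · rintro (rfl | h)
        · exact le_refl _
        · exact (Fin.castSucc_lt_iff_succ_le.2 h).le
    have hnot : i.castSucc ∉ Finset.univ.filter (fun u : Fin (k+1) => i.succ ≤ u) := by
      simp only [Finset.mem_filter, Finset.mem_univ, true_and]
      exact not_le.2 (Fin.castSucc_lt_succ : i.castSucc < i.succ)
    simp only [hΘ, hset, Finset.sum_insert hnot, hE]
  have hΘlast : Θ (Fin.last k) = E (Fin.last k) := by
    have hset : Finset.univ.filter (fun u : Fin (k+1) => Fin.last k ≤ u) = {Fin.last k} := by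
      ext u
      simp only [Finset.mem_filter, Finset.mem_univ, true_and, Finset.mem_singleton]
      exact ⟨fun h => le_antisymm (Fin.le_last u) h, fun h => h ▸ le_refl _⟩
    simp only [hΘ, hset, Finset.sum_singleton, hE]
  by_cases hord : ∀ i j : Fin (k + 1), i ≤ j → z (b j) ≤ z (b i)
  · rw [if_pos hord, one_mul]
    set w : Fin (k+1) → ℝ := fun m => Real.exp (-(z (b m))) with hw
    have hwpos : ∀ m, 0 < w m := fun m => Real.exp_pos _
    -- LHS in canonical form
    have hLHS : ∏ i : Fin (k+1), gumbelPDF (θ i) (z i)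
        = ((∏ m, E m) * ∏ m, w m) * Real.exp (-∑ m, E m * w m) := by
      rw [← Equiv.prod_comp b (fun i => gumbelPDF (θ i) (z i))]
      have hterm : ∀ m : Fin (k+1), gumbelPDF (θ (b m)) (z (b m))
          = (E m * w m) * Real.exp (-(E m * w m)) := by
        intro m
        simp only [gumbelPDF, hE, hw, ← Real.exp_add]
        ring_nf
      rw [Finset.prod_congr rfl (fun m _ => hterm m), Finset.prod_mul_distrib,
        Finset.prod_mul_distrib]
      congr 1
      rw [← Real.exp_sum]
      congr 1
      rw [← Finset.sum_neg_distrib]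
    rw [hLHS]
    -- simplify the truncated terms
    have htrunc : ∀ i : Fin k,
        truncGumbelPDF (Real.log (∑ u ∈ Finset.univ.filter (fun u => i.succ ≤ u),
            Real.exp (θ (b u)))) (z (b i.castSucc)) (z (b i.succ))
        = (Θ i.succ * w i.succ) * (Real.exp (-(Θ i.succ * w i.succ))
            / Real.exp (-(Θ i.succ * w i.castSucc))) := by
      intro i
      have hle : z (b i.succ) ≤ z (b i.castSucc) := hord _ _ (Fin.castSucc_le_succ i)
      have hexp : ∀ x : ℝ, Real.exp (-x + Real.log (Θ i.succ)) = Θ i.succ * Real.exp (-x) := by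
        intro x
        rw [Real.exp_add, Real.exp_log (hΘpos i.succ), mul_comm]
      simp only [truncGumbelPDF, gumbelPDF, gumbelCDF, if_pos hle, mul_one]
      rw [hexp, hexp]
      simp only [hw]
      ring
    rw [Finset.prod_congr rfl (fun i _ => htrunc i)]
    -- plackettLuce as a ratio of products
    have hPL : plackettLuce θ b = (∏ m, E m) / ∏ m, Θ m := by
      simp only [plackettLuce, hE, hΘ]
      rw [Finset.prod_div_distrib]
    rw [hPL]
    have hg0 : gumbelPDF 0 (z (b 0)) = w 0 * Real.exp (-(w 0)) := by
      simp only [gumbelPDF, hw, add_zero]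
    rw [hg0]
    rw [Finset.prod_mul_distrib, Finset.prod_mul_distrib]
    -- product identities
    have hΘprod : ∏ m, Θ m = ∏ i : Fin k, Θ i.succ := by
      rw [Fin.prod_univ_succ, hΘ0, one_mul]
    have hΘne : (∏ i : Fin k, Θ i.succ) ≠ 0 :=
      Finset.prod_ne_zero_iff.2 fun i _ => (hΘpos i.succ).ne'
    have hwprod : ∏ m, w m = w 0 * ∏ i : Fin k, w i.succ := Fin.prod_univ_succ w
    -- exponential identity
    have hexpprod : ∏ i : Fin k, (Real.exp (-(Θ i.succ * w i.succ))
        / Real.exp (-(Θ i.succ * w i.castSucc)))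
        = Real.exp (∑ i : Fin k, (Θ i.succ * w i.castSucc - Θ i.succ * w i.succ)) := by
      rw [Real.exp_sum]
      apply Finset.prod_congr rfl
      intro i _
      rw [← Real.exp_sub]
      congr 1
      ring
    rw [hexpprod]
    -- the key sum identity
    have hsumkey : -(w 0) + ∑ i : Fin k, (Θ i.succ * w i.castSucc - Θ i.succ * w i.succ)
        = -∑ m, E m * w m := by
      have h1 : ∑ i : Fin k, Θ i.succ * w i.succ
          = (∑ m, Θ m * w m) - Θ 0 * w 0 := by
        rw [Fin.sum_univ_succ (fun m => Θ m * w m)]; ring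
      have h2 : ∑ i : Fin k, Θ i.succ * w i.castSucc
          = (∑ m, Θ m * w m) - Θ (Fin.last k) * w (Fin.last k)
            - ((∑ m, E m * w m) - E (Fin.last k) * w (Fin.last k)) := by
        have h2a : ∑ i : Fin k, Θ i.succ * w i.castSucc
            = ∑ i : Fin k, (Θ i.castSucc * w i.castSucc - E i.castSucc * w i.castSucc) := by
          apply Finset.sum_congr rfl
          intro i _
          rw [hΘrec i]; ring
        rw [h2a, Finset.sum_sub_distrib,
          Fin.sum_univ_castSucc (fun m => Θ m * w m),
          Fin.sum_univ_castSucc (fun m => E m * w m)]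
        ring
      rw [Finset.sum_sub_distrib, h1, h2, hΘ0, hΘlast]
      ring
    -- combine
    have hexp2 : Real.exp (-(w 0)) *
        Real.exp (∑ i : Fin k, (Θ i.succ * w i.castSucc - Θ i.succ * w i.succ))
        = Real.exp (-∑ m, E m * w m) := by
      rw [← Real.exp_add, hsumkey]
    rw [hΘprod, hwprod, ← hexp2]
    field_simp
  · rw [if_neg hord, zero_mul]
    -- some adjacent pair violates the order
    have : ¬ Antitone (fun m => z (b m)) := by
      intro h
      exact hord (fun i j hij => h hij)
    rw [Fin.antitone_iff_succ_le] at this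
    push_neg at this
    obtain ⟨i, hi⟩ := this
    have hzero : truncGumbelPDF (Real.log (∑ u ∈ Finset.univ.filter (fun u => i.succ ≤ u),
        Real.exp (θ (b u)))) (z (b i.castSucc)) (z (b i.succ)) = 0 := by
      simp only [truncGumbelPDF, if_neg (not_le.2 hi), mul_zero, zero_div]
    rw [Finset.prod_eq_zero (Finset.mem_univ i) hzero]
    ring
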